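/- Let q be a quadratic form with rational coefficients on V = ℝ^{d+1} of signature (1,d) with d ≥ 2, and let Q = {[x] ∈ ℙ(V) : q(x) = 0} be the associated projective quadric. If Q contains a rational point, i.e. there exists a nonzero u ∈ ℚ^{d+1} with q(u) = 0, then the set of rational points of Q (points [v] with v ∈ ℚ^{d+1} nonzero, q(v) = 0) is dense in Q for the analytic topology. -/

import Mathlib

/- STATEMENT 18: Let q be a quadratic form with rational coefficients on V = ℝ^{d+1} of
signature (1,d) with d ≥ 2, and Q the associated projective quadric.  If Q contains a
rational point, then the rational points of Q are dense in Q (analytic topology). -/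

noncomputable instance projectivizationTopology (K W : Type*) [DivisionRing K] [AddCommGroup W]
    [Module K W] [TopologicalSpace W] : TopologicalSpace (Projectivization K W) :=
  inferInstanceAs (TopologicalSpace (Quotient (projectivizationSetoid K W)))

/-- The rational points of `V = ℝ^{d+1}`. -/
def ratPts (d : ℕ) : Set (Fin (d + 1) → ℝ) := {x | ∀ i, ∃ r : ℚ, x i = (r : ℝ)}

/-- `q` is nondegenerate of signature `(1, d)`. -/
def hasSigOneD (d : ℕ) (B : (Fin (d + 1) → ℝ) →ₗ[ℝ] (Fin (d + 1) → ℝ) →ₗ[ℝ] ℝ) : Prop :=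
  ∃ b : Module.Basis (Fin (d + 1)) ℝ (Fin (d + 1) → ℝ),
    (∀ i j, i ≠ j → B (b i) (b j) = 0) ∧
    (0 < B (b 0) (b 0)) ∧ ∀ i, i ≠ 0 → B (b i) (b i) < 0

/-- The projective quadric `Q = {[x] ∈ ℙ(V) : q(x) = 0}`. -/
def QSet (d : ℕ) (B : (Fin (d + 1) → ℝ) →ₗ[ℝ] (Fin (d + 1) → ℝ) →ₗ[ℝ] ℝ) :
    Set (Projectivization ℝ (Fin (d + 1) → ℝ)) :=
  {p | B p.rep p.rep = 0}

open Filter Topology Module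

section Aux
variable {d : ℕ} {B : (Fin (d + 1) → ℝ) →ₗ[ℝ] (Fin (d + 1) → ℝ) →ₗ[ℝ] ℝ}

lemma vec_eq_sum (w : Fin (d + 1) → ℝ) : w = ∑ i, w i • (Pi.single i 1 : Fin (d + 1) → ℝ) := by
  funext j
  rw [Finset.sum_apply]
  simp [Pi.single_apply]

lemma B_expand (x y : Fin (d + 1) → ℝ) :
    B x y = ∑ i, x i * B (Pi.single i 1) y := by
  conv_lhs => rw [vec_eq_sum x]
  rw [map_sum, LinearMap.sum_apply]
  simp [smul_eq_mul]

lemma B_expand2 (x y : Fin (d + 1) → ℝ) :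
    B x y = ∑ i, ∑ j, x i * y j * B (Pi.single i 1) (Pi.single j 1) := by
  rw [B_expand]
  refine Finset.sum_congr rfl fun i _ => ?_
  rw [show B (Pi.single i 1) y = ∑ j, y j * B (Pi.single i 1) (Pi.single j 1) by
    conv_lhs => rw [vec_eq_sum y]
    rw [map_sum]
    simp [smul_eq_mul], Finset.mul_sum]
  exact Finset.sum_congr rfl fun j _ => by ring

lemma B_rat (hratcoef : ∀ i j, ∃ r : ℚ, B (Pi.single i 1) (Pi.single j 1) = (r : ℝ))
    {x y : Fin (d + 1) → ℝ} (hx : x ∈ ratPts d) (hy : y ∈ ratPts d) :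
    ∃ r : ℚ, B x y = (r : ℝ) := by
  have h : B x y ∈ (Rat.castHom ℝ).range := by
    rw [B_expand2]
    refine Subring.sum_mem _ fun i _ => Subring.sum_mem _ fun j _ => ?_
    obtain ⟨rx, hrx⟩ := hx i
    obtain ⟨ry, hry⟩ := hy j
    obtain ⟨rc, hrc⟩ := hratcoef i j
    exact ⟨rx * ry * rc, by rw [hrx, hry, hrc, map_mul, map_mul]; norm_num⟩
  obtain ⟨r, hr⟩ := h
  exact ⟨r, hr.symm⟩

lemma ratPts_dense : Dense (ratPts d) := by
  have : ratPts d = Set.pi Set.univ (fun _ : Fin (d + 1) => Set.range ((↑) : ℚ → ℝ)) := by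
    ext x
    simp [ratPts, Set.mem_pi, eq_comm]
  rw [this]
  exact dense_pi Set.univ fun i _ => Rat.denseRange_cast

lemma isotropic_pair (hsig : hasSigOneD d B)
    (hsymm : ∀ x y, B x y = B y x) {u x : Fin (d + 1) → ℝ}
    (hu : u ≠ 0) (huu : B u u = 0) (hxx : B x x = 0) (hux : B u x = 0) :
    ∃ c : ℝ, x = c • u := by
  by_contra hcon
  push_neg at hcon
  obtain ⟨b, horth, -, hneg⟩ := hsig
  -- u, x are linearly independent
  have hind : LinearIndependent ℝ ![u, x] := by
    rw [LinearIndependent.pair_iff' hu]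
    intro a ha
    exact hcon a ha.symm
  -- the negative-definite subspace
  set f : {i : Fin (d + 1) // i ≠ 0} → (Fin (d + 1) → ℝ) := fun i => b i with hf
  have hfind : LinearIndependent ℝ f := b.linearIndependent.comp _ Subtype.val_injective
  set N : Submodule ℝ (Fin (d + 1) → ℝ) := Submodule.span ℝ (Set.range f) with hN
  set W : Submodule ℝ (Fin (d + 1) → ℝ) := Submodule.span ℝ (Set.range ![u, x]) with hW
  have hcard : Fintype.card {i : Fin (d + 1) // i ≠ 0} = d := by
    simp [Fintype.card_subtype_compl]
  have hfinN : finrank ℝ N = d := by rw [finrank_span_eq_card hfind, hcard]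
  have hfinW : finrank ℝ W = 2 := by rw [finrank_span_eq_card hind]; simp
  -- W ⊓ N is nontrivial
  have hsum : finrank ℝ ↥(W ⊔ N) + finrank ℝ ↥(W ⊓ N) = 2 + d := by
    rw [Submodule.finrank_sup_add_finrank_inf_eq, hfinW, hfinN]
  have hle : finrank ℝ ↥(W ⊔ N) ≤ d + 1 := by
    have := Submodule.finrank_le (W ⊔ N)
    simpa using this
  have hpos : 0 < finrank ℝ ↥(W ⊓ N) := by omega
  obtain ⟨v, hv0⟩ := Module.finrank_pos_iff_exists_ne_zero.1 hpos
  have hvW : (v : Fin (d + 1) → ℝ) ∈ W := v.2.1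
  have hvN : (v : Fin (d + 1) → ℝ) ∈ N := v.2.2
  have hvne : (v : Fin (d + 1) → ℝ) ≠ 0 := fun h => hv0 (Subtype.ext h)
  -- B v v = 0 since v ∈ span {u, x}
  have hBv0 : B v v = 0 := by
    obtain ⟨c, hc⟩ := (Submodule.mem_span_range_iff_exists_fun ℝ).1 hvW
    have hv : (v : Fin (d + 1) → ℝ) = c 0 • u + c 1 • x := by
      rw [← hc, Fin.sum_univ_two]
      simp
    rw [hv]
    simp only [map_add, map_smul, LinearMap.add_apply, LinearMap.smul_apply, smul_eq_mul]
    rw [huu, hxx, hux, hsymm x u, hux]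
    ring
  -- B v v < 0 since v ∈ N, v ≠ 0
  have hBvneg : B v v < 0 := by
    obtain ⟨c, hc⟩ := (Submodule.mem_span_range_iff_exists_fun ℝ).1 hvN
    have hex : ∃ i, c i ≠ 0 := by
      by_contra hall
      push_neg at hall
      apply hvne
      rw [← hc]
      simp [hall]
    obtain ⟨i₀, hi₀⟩ := hex
    have hdiag : B v v = ∑ i, ∑ j, c i * c j * B (f i) (f j) := by
      rw [← hc]
      simp only [map_sum, LinearMap.sum_apply, map_smul, LinearMap.smul_apply, smul_eq_mul,
        Finset.mul_sum, Finset.sum_apply]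
      exact Finset.sum_congr rfl fun i _ => Finset.sum_congr rfl fun j _ => by rw [hsymm (f j) (f i)]; ring
    have hdiag2 : ∀ i : {i : Fin (d + 1) // i ≠ 0},
        ∑ j, c i * c j * B (f i) (f j) = c i * c i * B (f i) (f i) := by
      intro i
      rw [Finset.sum_eq_single i]
      · intro j _ hji
        rw [horth _ _ (fun h => hji (Subtype.ext h.symm))]
        ring
      · intro h; exact absurd (Finset.mem_univ i) h
    rw [hdiag, Finset.sum_congr rfl fun i _ => hdiag2 i]
    have hterm : ∀ i : {i : Fin (d + 1) // i ≠ 0}, i ∈ Finset.univ →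
        c i * c i * B (f i) (f i) ≤ 0 := fun i _ =>
      mul_nonpos_of_nonneg_of_nonpos (mul_self_nonneg _) (le_of_lt (hneg i i.2))
    have hstrict : c i₀ * c i₀ * B (f i₀) (f i₀) < 0 :=
      mul_neg_of_pos_of_neg (mul_self_pos.mpr hi₀) (hneg i₀ i₀.2)
    calc ∑ i, c i * c i * B (f i) (f i)
        < ∑ _i : {i : Fin (d + 1) // i ≠ 0}, (0 : ℝ) :=
          Finset.sum_lt_sum hterm ⟨i₀, Finset.mem_univ i₀, hstrict⟩
      _ = 0 := by simp
  exact absurd hBv0 (ne_of_lt hBvneg)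

lemma B_cont_fst (y : Fin (d + 1) → ℝ) : Continuous fun w => B w y := by
  have h : (fun w => B w y) = fun w => ∑ i, w i * B (Pi.single i 1) y := by
    funext w; exact B_expand w y
  rw [h]
  exact continuous_finset_sum _ fun i _ => (continuous_apply i).mul continuous_const

lemma B_cont_diag : Continuous fun w => B w w := by
  have h : (fun w => B w w) = fun w => ∑ i, w i * B (Pi.single i 1) w := by
    funext w; exact B_expand w w
  rw [h]
  exact continuous_finset_sum _ fun i _ =>
    (continuous_apply i).mul (B (Pi.single i 1)).continuous_of_finiteDimensional

end Aux

theorem stmt_18 (d : ℕ) (hd : 2 ≤ d)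
    (B : (Fin (d + 1) → ℝ) →ₗ[ℝ] (Fin (d + 1) → ℝ) →ₗ[ℝ] ℝ)
    (hsymm : ∀ x y, B x y = B y x)
    -- q has rational coefficients
    (hratcoef : ∀ i j, ∃ r : ℚ, B (Pi.single i 1) (Pi.single j 1) = (r : ℝ))
    (hsig : hasSigOneD d B)
    -- Q contains a rational point
    (hQrat : ∃ u : Fin (d + 1) → ℝ, u ∈ ratPts d ∧ u ≠ 0 ∧ B u u = 0) :
    -- the rational points of Q are dense in Q
    QSet d B ⊆
      closure {p | ∃ v ∈ ratPts d, ∃ hv : v ≠ 0, B v v = 0 ∧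
        p = Projectivization.mk ℝ v hv} := by
  obtain ⟨u, hu_rat, hu0, huu⟩ := hQrat
  intro p hp
  set x := p.rep with hxdef
  have hx0 : x ≠ 0 := p.rep_nonzero
  have hxx : B x x = 0 := hp
  by_cases hux : B u x = 0
  · -- x is proportional to u, so p = [u] is itself rational
    obtain ⟨c, hc⟩ := isotropic_pair hsig hsymm hu0 huu hxx hux
    have hc0 : c ≠ 0 := by
      rintro rfl
      exact hx0 (by simpa using hc)
    apply subset_closure
    refine ⟨u, hu_rat, hu0, huu, ?_⟩
    rw [← Projectivization.mk_rep p]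
    exact ((Projectivization.mk_eq_mk_iff' ℝ _ _ p.rep_nonzero hu0).2 ⟨c, hc.symm⟩)
  · -- stereographic projection argument
    set φ : (Fin (d + 1) → ℝ) → (Fin (d + 1) → ℝ) :=
      fun w => B w w • u - (2 * B u w) • w with hφdef
    have hφ_iso : ∀ w, B (φ w) (φ w) = 0 := by
      intro w
      simp only [hφdef, map_sub, map_smul, LinearMap.sub_apply, LinearMap.smul_apply,
        smul_eq_mul]
      rw [huu, hsymm w u]
      ring
    have hφ_rat : ∀ w ∈ ratPts d, φ w ∈ ratPts d := by
      intro w hw i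
      obtain ⟨r1, hr1⟩ := B_rat hratcoef hw hw
      obtain ⟨r2, hr2⟩ := B_rat hratcoef hu_rat hw
      obtain ⟨ru, hru⟩ := hu_rat i
      obtain ⟨rw, hrw⟩ := hw i
      refine ⟨r1 * ru - 2 * r2 * rw, ?_⟩
      simp only [hφdef, Pi.sub_apply, Pi.smul_apply, smul_eq_mul]
      rw [hr1, hr2, hru, hrw]
      push_cast
      ring
    have hφx : φ x = (-(2 * B u x)) • x := by
      simp only [hφdef, hxx, zero_smul, zero_sub, neg_smul]
    have hc0 : -(2 * B u x) ≠ 0 := by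
      simp [hux]
    have hφx0 : φ x ≠ 0 := by
      rw [hφx]
      exact smul_ne_zero hc0 hx0
    have hcont : Continuous φ := by
      exact (B_cont_diag.smul continuous_const).sub
        ((continuous_const.mul (B u).continuous_of_finiteDimensional).smul continuous_id)
    -- the target point equals mk (φ x)
    have hpφx : Projectivization.mk ℝ (φ x) hφx0 = p := by
      conv_rhs => rw [← Projectivization.mk_rep p]
      exact (Projectivization.mk_eq_mk_iff' ℝ _ _ hφx0 p.rep_nonzero).2 ⟨-(2 * B u x), hφx.symm⟩
    -- set up the filter
    set U : Set (Fin (d + 1) → ℝ) := {w | φ w ≠ 0} with hUdef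
    have hUopen : IsOpen U := isOpen_compl_singleton.preimage hcont
    have hxU : x ∈ U := hφx0
    set t : Set (Fin (d + 1) → ℝ) := U ∩ ratPts d with htdef
    have hxcl : x ∈ closure t := ratPts_dense.open_subset_closure_inter hUopen hxU
    have hne : (𝓝[t] x).NeBot := mem_closure_iff_nhdsWithin_neBot.1 hxcl
    -- the function into projective space
    set G : (Fin (d + 1) → ℝ) → {v : Fin (d + 1) → ℝ // v ≠ 0} :=
      fun w => if h : φ w ≠ 0 then ⟨φ w, h⟩ else ⟨φ x, hφx0⟩ with hGdef
    set F : (Fin (d + 1) → ℝ) → Projectivization ℝ (Fin (d + 1) → ℝ) :=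
      fun w => Quotient.mk'' (G w) with hFdef
    have hGt : Tendsto G (𝓝[t] x) (𝓝 (⟨φ x, hφx0⟩ : {v : Fin (d + 1) → ℝ // v ≠ 0})) := by
      rw [tendsto_subtype_rng]
      have hφt : Tendsto φ (𝓝[t] x) (𝓝 (φ x)) :=
        (hcont.tendsto x).mono_left nhdsWithin_le_nhds
      refine hφt.congr' ?_
      filter_upwards [self_mem_nhdsWithin] with w hw
      have hwne : φ w ≠ 0 := hw.1
      simp only [hGdef]
      rw [dif_pos hwne]
    have hFt : Tendsto F (𝓝[t] x) (𝓝 p) := by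
      have hq : Continuous (Quotient.mk'' :
          {v : Fin (d + 1) → ℝ // v ≠ 0} → Projectivization ℝ (Fin (d + 1) → ℝ)) :=
        continuous_quotient_mk'
      have := (hq.tendsto _).comp hGt
      rwa [show (Quotient.mk'' (⟨φ x, hφx0⟩ : {v : Fin (d + 1) → ℝ // v ≠ 0}) :
          Projectivization ℝ (Fin (d + 1) → ℝ)) = p from hpφx] at this
    refine mem_closure_of_tendsto hFt ?_
    filter_upwards [self_mem_nhdsWithin] with w hw
    have hwne : φ w ≠ 0 := hw.1
    refine ⟨φ w, hφ_rat w hw.2, hwne, hφ_iso w, ?_⟩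
    simp only [hFdef, hGdef]
    rw [dif_pos hwne]
    rfl
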